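/- Let (Ω, ν) be a measure space with ν(Ω) < ∞, let 1 < p < q < r be real exponents, and let f : Ω × ℝ → ℝ be a Carathéodory function with |f(x,s)| ≤ c(1 + |s|^{r-1}) for ν-a.e. x and all s (for some c > 0), which is uniformly q-superlinear at ±∞, i.e. for every τ > 0 there exists K_τ > 0 with f(x,s)s ≥ τ|s|^q for ν-a.e. x and all |s| ≥ K_τ. Set F(x,s) = ∫_0^s f(x,t) dt. Let a ≥ 0, b ≥ 0 be reals and let u ∈ L^r(Ω, ν) satisfy ∫_Ω |u|^q dν > 0. Then (a/p)t^p + (b/q)t^q − ∫_Ω F(x, t·u(x)) dν(x) → −∞ as t → +∞. -/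

import Mathlib

open MeasureTheory Filter intervalIntegral

section
open Set

lemma boundInt_eq {r c : ℝ} (hr1 : 1 < r) {A : ℝ} (hA : 0 ≤ A) :
    ∫ t in (0:ℝ)..A, c * (1 + |t| ^ (r-1)) = c * (A + A ^ r / r) := by
  have hr0 : (0:ℝ) < r := by linarith
  have h1 : ∫ t in (0:ℝ)..A, c * (1 + |t| ^ (r-1)) = ∫ t in (0:ℝ)..A, c * (1 + t ^ (r-1)) := by
    apply intervalIntegral.integral_congr
    intro t ht
    rw [uIcc_of_le hA] at ht
    show c * (1 + |t| ^ (r-1)) = _;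
    rw [abs_of_nonneg ht.1]
  rw [h1, intervalIntegral.integral_const_mul]
  have h2 : ∫ t in (0:ℝ)..A, (1 + t ^ (r-1)) = A + A ^ r / r := by
    rw [intervalIntegral.integral_add (intervalIntegrable_const)
      (intervalIntegral.intervalIntegrable_rpow (Or.inl (by linarith)))]
    rw [intervalIntegral.integral_const, integral_rpow (Or.inl (by linarith))]
    rw [sub_add_cancel, Real.zero_rpow hr0.ne']
    simp
  rw [h2]

lemma boundInt_integrable {r c : ℝ} (hr1 : 1 < r) (A B : ℝ) :
    IntervalIntegrable (fun t => c * (1 + |t| ^ (r-1))) MeasureTheory.volume A B := by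
  apply Continuous.intervalIntegrable
  have : Continuous fun t : ℝ => |t| ^ (r-1) :=
    continuous_abs.rpow_const (fun t => Or.inr (by linarith))
  continuity

lemma absF_le {r c : ℝ} (hr1 : 1 < r) (hc : 0 ≤ c) {g : ℝ → ℝ} (hg : Continuous g)
    (hgrow : ∀ s, |g s| ≤ c * (1 + |s| ^ (r-1))) (s : ℝ) :
    |∫ t in (0:ℝ)..s, g t| ≤ c * (|s| + |s| ^ r / r) := by
  have hr0 : (0:ℝ) < r := by linarith
  have key : |∫ t in (0:ℝ)..s, g t| ≤ |∫ t in (0:ℝ)..s, c * (1 + |t| ^ (r-1))| := by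
    rw [← Real.norm_eq_abs (∫ t in (0:ℝ)..s, g t)]
    apply intervalIntegral.norm_integral_le_abs_of_norm_le _ (boundInt_integrable hr1 0 s)
    exact Filter.Eventually.of_forall fun t => hgrow t
  rcases le_or_gt 0 s with hs | hs
  · rw [boundInt_eq hr1 hs] at key
    rw [abs_of_nonneg hs]
    refine key.trans (le_of_eq (abs_of_nonneg ?_))
    have : (0:ℝ) ≤ s ^ r := Real.rpow_nonneg hs r
    positivity
  · have hs' : (0:ℝ) ≤ -s := by linarith
    have he : ∫ t in (0:ℝ)..s, c * (1 + |t| ^ (r-1)) = -∫ t in (0:ℝ)..(-s), c * (1 + |t| ^ (r-1)) := by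
      have h1 : ∫ t in (0:ℝ)..s, c * (1 + |t| ^ (r-1))
          = ∫ t in (0:ℝ)..s, (fun y => c * (1 + |y| ^ (r-1))) (-t) := by
        apply intervalIntegral.integral_congr
        intro t _
        simp [abs_neg]
      rw [h1, intervalIntegral.integral_comp_neg (fun y => c * (1 + |y| ^ (r-1)))]
      rw [neg_zero, ← intervalIntegral.integral_symm]
    rw [he, abs_neg, boundInt_eq hr1 hs'] at key
    rw [abs_of_nonpos hs.le]
    refine key.trans (le_of_eq (abs_of_nonneg ?_))
    have : (0:ℝ) ≤ (-s) ^ r := Real.rpow_nonneg hs' r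
    positivity

lemma F_lower {q r c τ K : ℝ} (hq1 : 1 < q) (hqr : q < r) (hc : 0 ≤ c) (hτ : 0 < τ)
    (hK : 0 < K) {g : ℝ → ℝ} (hg : Continuous g)
    (hgrow : ∀ s, |g s| ≤ c * (1 + |s| ^ (r-1)))
    (hsup : ∀ s, K ≤ |s| → τ * |s| ^ q ≤ g s * s) (s : ℝ)
    (absF_le : ∀ s, |∫ t in (0:ℝ)..s, g t| ≤ c * (|s| + |s| ^ r / r)) :
    τ/q * |s|^q - (τ/q * K^q + 2*(c*(K + K^r/r))) ≤ ∫ t in (0:ℝ)..s, g t := by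
  have hq0 : (0:ℝ) < q := by linarith
  have hr0 : (0:ℝ) < r := by linarith
  have hCK : (0:ℝ) ≤ c * (K + K^r/r) := by
    have : (0:ℝ) ≤ K ^ r := Real.rpow_nonneg hK.le r
    positivity
  have hFK : ∀ A : ℝ, |A| ≤ K → -(c*(K + K^r/r)) ≤ ∫ t in (0:ℝ)..A, g t := by
    intro A hA
    have h1 := absF_le A
    have h2 : c * (|A| + |A| ^ r / r) ≤ c * (K + K^r/r) := by
      have h3 : |A| ^ r ≤ K ^ r := Real.rpow_le_rpow (abs_nonneg A) hA hr0.le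
      gcongr
    linarith [neg_abs_le (∫ t in (0:ℝ)..A, g t)]
  rcases le_or_gt (|s|) K with hsK | hsK
  · have h1 : τ/q * |s|^q ≤ τ/q * K^q := by
      have h3 : |s| ^ q ≤ K ^ q := Real.rpow_le_rpow (abs_nonneg s) hsK hq0.le
      have : (0:ℝ) ≤ τ/q := by positivity
      exact mul_le_mul_of_nonneg_left h3 this
    linarith [hFK s hsK]
  · rcases le_or_gt 0 s with hs0 | hs0
    · -- positive case : K < s
      have hKs : K ≤ s := by rw [abs_of_nonneg hs0] at hsK; linarith
      have hpow_int : IntervalIntegrable (fun t => τ * t^(q-1)) volume K s :=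
        (intervalIntegral.intervalIntegrable_rpow (Or.inl (by linarith))).const_mul τ
      have hmono : ∫ t in K..s, τ * t^(q-1) ≤ ∫ t in K..s, g t := by
        apply intervalIntegral.integral_mono_on hKs hpow_int (hg.intervalIntegrable _ _)
        intro t ht
        have ht0 : 0 < t := lt_of_lt_of_le hK ht.1
        have hsupt := hsup t (by rw [abs_of_pos ht0]; exact ht.1)
        rw [abs_of_pos ht0] at hsupt
        have e1 : t^(q-1) = t^q / t := by
          rw [Real.rpow_sub ht0, Real.rpow_one]
        rw [e1, ← mul_div_assoc]
        exact (div_le_iff₀ ht0).mpr hsupt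
      have hval : ∫ t in K..s, τ * t^(q-1) = τ * ((s^q - K^q)/q) := by
        rw [intervalIntegral.integral_const_mul, integral_rpow (Or.inl (by linarith))]
        rw [sub_add_cancel]
      have hsplit := intervalIntegral.integral_add_adjacent_intervals
        (hg.intervalIntegrable (μ := volume) 0 K) (hg.intervalIntegrable (μ := volume) K s)
      have hFK' := hFK K (by rw [abs_of_pos hK])
      have hring : τ * ((s^q - K^q)/q) = τ/q * s^q - τ/q * K^q := by ring
      rw [abs_of_nonneg hs0]
      linarith
    · -- negative case : s < -K
      have hKs : s ≤ -K := by rw [abs_of_neg hs0] at hsK; linarith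
      have hcontpow : Continuous (fun t : ℝ => -τ * (-t)^(q-1)) := by
        have : Continuous (fun t : ℝ => (-t)^(q-1)) :=
          continuous_neg.rpow_const (fun t => Or.inr (by linarith))
        continuity
      have hmono : ∫ t in s..(-K), g t ≤ ∫ t in s..(-K), -τ * (-t)^(q-1) := by
        apply intervalIntegral.integral_mono_on hKs (hg.intervalIntegrable _ _)
          (hcontpow.intervalIntegrable _ _)
        intro t ht
        have ht0 : t < 0 := lt_of_le_of_lt ht.2 (by linarith)
        have ht0' : (0:ℝ) < -t := by linarith
        have hsupt := hsup t (by rw [abs_of_neg ht0]; linarith [ht.2])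
        rw [abs_of_neg ht0] at hsupt
        have e1 : (-t)^(q-1) = (-t)^q / (-t) := by
          rw [Real.rpow_sub ht0', Real.rpow_one]
        have e2 : -τ * (-t)^(q-1) = τ * (-t)^q / t := by
          rw [e1]; field_simp
        rw [e2]
        exact (le_div_iff_of_neg ht0).mpr hsupt
      have hval : ∫ t in s..(-K), -τ * (-t)^(q-1) = -τ * (((-s)^q - K^q)/q) := by
        have h1 : ∫ t in s..(-K), -τ * (-t)^(q-1)
            = ∫ t in s..(-K), (fun y => -τ * y^(q-1)) (-t) := by rfl
        rw [h1, intervalIntegral.integral_comp_neg (fun y => -τ * y^(q-1)), neg_neg]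
        rw [intervalIntegral.integral_const_mul, integral_rpow (Or.inl (by linarith))]
        rw [sub_add_cancel]
      have hsplit := intervalIntegral.integral_add_adjacent_intervals
        (hg.intervalIntegrable (μ := volume) 0 (-K)) (hg.intervalIntegrable (μ := volume) (-K) s)
      have hsymm : ∫ t in (-K)..s, g t = -∫ t in s..(-K), g t :=
        intervalIntegral.integral_symm s (-K)
      have hFK' := hFK (-K) (by rw [abs_neg, abs_of_pos hK])
      have hring : -τ * (((-s)^q - K^q)/q) = -(τ/q * (-s)^q - τ/q * K^q) := by ring
      rw [abs_of_neg hs0]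
      linarith

end

/-- Scalar core of Proposition 4.4: on a finite measure space, with `1 < p < q < r`,
a Carathéodory `f` with `(r-1)`-growth which is uniformly `q`-superlinear at `±∞`,
`a, b ≥ 0`, and `u ∈ L^r` with `∫ |u|^q dν > 0`, one has
`(a/p)t^p + (b/q)t^q − ∫ F(x, tu(x)) dν → −∞` as `t → +∞`. -/
theorem energy_tendsto_neg_infty {Ω : Type*} [MeasurableSpace Ω]
    (ν : MeasureTheory.Measure Ω) [MeasureTheory.IsFiniteMeasure ν]
    (p q r : ℝ) (hp : 1 < p) (hpq : p < q) (hqr : q < r)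
    (f : Ω → ℝ → ℝ)
    (hmeas : ∀ s : ℝ, Measurable fun x => f x s)
    (hcont : ∀ᵐ x ∂ν, Continuous fun s => f x s)
    (c : ℝ) (hc : 0 < c)
    (hgrowth : ∀ᵐ x ∂ν, ∀ s : ℝ, |f x s| ≤ c * (1 + |s| ^ (r - 1)))
    (hsuper : ∀ τ : ℝ, 0 < τ → ∃ K : ℝ, 0 < K ∧
      ∀ᵐ x ∂ν, ∀ s : ℝ, K ≤ |s| → τ * |s| ^ q ≤ f x s * s)
    (a b : ℝ) (ha : 0 ≤ a) (hb : 0 ≤ b)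
    (u : Ω → ℝ) (hu : Measurable u)
    (hur : (∫⁻ x, ENNReal.ofReal (|u x| ^ r) ∂ν) < ⊤)
    (huq : 0 < ∫⁻ x, ENNReal.ofReal (|u x| ^ q) ∂ν) :
    Tendsto (fun t : ℝ =>
        a / p * t ^ p + b / q * t ^ q - ∫ x, (∫ s in (0:ℝ)..(t * u x), f x s) ∂ν)
      atTop atBot := by

  classical
  have hq1 : 1 < q := lt_trans hp hpq
  have hr1 : 1 < r := lt_trans hq1 hqr
  have hq0 : (0:ℝ) < q := by linarith
  have hr0 : (0:ℝ) < r := by linarith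
  have hp0 : (0:ℝ) < p := by linarith
  -- integrability of |u|^r, |u|, |u|^q
  have hmr : Measurable (fun x => |u x| ^ r) :=
    ((continuous_id.rpow_const fun _ => Or.inr hr0.le).measurable).comp hu.abs
  have hmq : Measurable (fun x => |u x| ^ q) :=
    ((continuous_id.rpow_const fun _ => Or.inr hq0.le).measurable).comp hu.abs
  have hur_int : Integrable (fun x => |u x| ^ r) ν := by
    refine ⟨hmr.aestronglyMeasurable, ?_⟩
    rw [hasFiniteIntegral_iff_ofReal (Filter.Eventually.of_forall fun x =>
      Real.rpow_nonneg (abs_nonneg _) r)]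
    exact hur
  have hbnd_int : Integrable (fun x => 1 + |u x| ^ r) ν := (integrable_const 1).add hur_int
  have hu1_int : Integrable (fun x => |u x|) ν := by
    apply hbnd_int.mono' hu.abs.aestronglyMeasurable
    refine Filter.Eventually.of_forall fun x => ?_
    rw [Real.norm_eq_abs, abs_abs]
    rcases le_or_gt (|u x|) 1 with h | h
    · have : (0:ℝ) ≤ |u x| ^ r := Real.rpow_nonneg (abs_nonneg _) r
      linarith
    · have h2 : |u x| ^ (1:ℝ) ≤ |u x| ^ r :=
        Real.rpow_le_rpow_of_exponent_le h.le (by linarith)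
      rw [Real.rpow_one] at h2; linarith
  have huq_int : Integrable (fun x => |u x| ^ q) ν := by
    apply hbnd_int.mono' hmq.aestronglyMeasurable
    refine Filter.Eventually.of_forall fun x => ?_
    rw [Real.norm_eq_abs, abs_of_nonneg (Real.rpow_nonneg (abs_nonneg _) q)]
    rcases le_or_gt (|u x|) 1 with h | h
    · have h1 : |u x| ^ q ≤ 1 := Real.rpow_le_one (abs_nonneg _) h hq0.le
      have : (0:ℝ) ≤ |u x| ^ r := Real.rpow_nonneg (abs_nonneg _) r
      linarith
    · have h2 : |u x| ^ q ≤ |u x| ^ r :=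
        Real.rpow_le_rpow_of_exponent_le h.le hqr.le
      linarith
  -- positivity of Iq
  set Iq := ∫ x, |u x| ^ q ∂ν with hIqdef
  have hIq : 0 < Iq := by
    rw [hIqdef, integral_eq_lintegral_of_nonneg_ae (Filter.Eventually.of_forall fun x =>
      Real.rpow_nonneg (abs_nonneg _) q) hmq.aestronglyMeasurable]
    apply ENNReal.toReal_pos huq.ne'
    have := huq_int.hasFiniteIntegral
    rw [hasFiniteIntegral_iff_ofReal (Filter.Eventually.of_forall fun x =>
      Real.rpow_nonneg (abs_nonneg _) q)] at this
    exact this.ne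
  -- choice of τ and K
  have hap : (0:ℝ) ≤ a / p := div_nonneg ha hp0.le
  have hbq : (0:ℝ) ≤ b / q := div_nonneg hb hq0.le
  set τ := q * (a / p + b / q + 1) / Iq with hτdef
  have hτ : 0 < τ := div_pos (mul_pos hq0 (by linarith)) hIq
  have hτIq : τ / q * Iq = a / p + b / q + 1 := by
    rw [hτdef]; field_simp
  obtain ⟨K, hK, hKsup⟩ := hsuper τ hτ
  set C := τ/q * K^q + 2*(c*(K + K^r/r)) with hCdef
  set m := (ν Set.univ).toReal with hmdef
  -- a.e. good set
  have hae : ∀ᵐ x ∂ν, Continuous (fun s => f x s) ∧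
      (∀ s : ℝ, |f x s| ≤ c * (1 + |s| ^ (r - 1))) ∧
      (∀ s : ℝ, K ≤ |s| → τ * |s| ^ q ≤ f x s * s) := hcont.and (hgrowth.and hKsup)
  obtain ⟨N, hsub, hNm, hN0⟩ := exists_measurable_superset_of_null (ae_iff.mp hae)
  have hP : ∀ x, x ∉ N → Continuous (fun s => f x s) ∧
      (∀ s : ℝ, |f x s| ≤ c * (1 + |s| ^ (r - 1))) ∧
      (∀ s : ℝ, K ≤ |s| → τ * |s| ^ q ≤ f x s * s) :=
    fun x hx => of_not_not (fun h => hx (hsub h))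
  set f' : Ω → ℝ → ℝ := fun x s => if x ∈ N then 0 else f x s with hf'def
  have hf'cont : ∀ x, Continuous fun s => f' x s := by
    intro x
    by_cases hx : x ∈ N
    · simp only [hf'def, if_pos hx]; exact continuous_const
    · simp only [hf'def, if_neg hx]; exact (hP x hx).1
  have hf'meas : ∀ s, Measurable fun x => f' x s :=
    fun s => Measurable.ite hNm measurable_const (hmeas s)
  have hjoint : Measurable fun z : Ω × ℝ => f' z.1 z.2 :=
    (measurable_uncurry_of_continuous_of_measurable
      (u := fun s x => f' x s) hf'cont hf'meas).comp measurable_swap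
  -- strong measurability of the parametric integral
  have key : ∀ g h : Ω → ℝ, Measurable g → Measurable h →
      StronglyMeasurable (fun x => ∫ s in Set.Ioc (g x) (h x), f' x s) := by
    intro g h hgm hhm
    have he : (fun x => ∫ s in Set.Ioc (g x) (h x), f' x s)
        = fun x => ∫ s, (Set.Ioc (g x) (h x)).indicator (f' x) s := by
      funext x; rw [MeasureTheory.integral_indicator measurableSet_Ioc]
    rw [he]
    apply MeasureTheory.StronglyMeasurable.integral_prod_right
      (f := fun x s => (Set.Ioc (g x) (h x)).indicator (f' x) s)
    apply Measurable.stronglyMeasurable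
    have he2 : (Function.uncurry fun x s => (Set.Ioc (g x) (h x)).indicator (f' x) s)
        = fun z : Ω × ℝ => if g z.1 < z.2 ∧ z.2 ≤ h z.1 then f' z.1 z.2 else 0 := by
      funext z
      simp [Function.uncurry, Set.indicator_apply, Set.mem_Ioc]
    rw [he2]
    exact Measurable.ite
      ((measurableSet_lt (hgm.comp measurable_fst) measurable_snd).inter
        (measurableSet_le measurable_snd (hhm.comp measurable_fst)))
      hjoint measurable_const
  have hGsm : ∀ t : ℝ, StronglyMeasurable fun x => ∫ s in (0:ℝ)..(t * u x), f' x s := by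
    intro t
    have he : (fun x => ∫ s in (0:ℝ)..(t * u x), f' x s)
        = fun x => (∫ s in Set.Ioc 0 (t * u x), f' x s)
            - ∫ s in Set.Ioc (t * u x) 0, f' x s := rfl
    rw [he]
    exact (key _ _ measurable_const (hu.const_mul t)).sub
      (key _ _ (hu.const_mul t) measurable_const)
  have hNae : ∀ᵐ x ∂ν, x ∉ N := by
    rw [ae_iff]; simpa [not_not] using hN0
  have hae_eq : ∀ t : ℝ, (fun x => ∫ s in (0:ℝ)..(t * u x), f x s)
      =ᵐ[ν] fun x => ∫ s in (0:ℝ)..(t * u x), f' x s := by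
    intro t
    filter_upwards [hNae] with x hx
    have : (fun s => f' x s) = fun s => f x s := by
      funext s; simp only [hf'def, if_neg hx]
    rw [this]
  -- the main lower bound for the integral term
  have hlow : ∀ t : ℝ, τ/q * |t|^q * Iq - C * m
      ≤ ∫ x, (∫ s in (0:ℝ)..(t * u x), f x s) ∂ν := by
    intro t
    have hGb : Integrable (fun x => c * (|t| * |u x| + |t|^r * |u x|^r / r)) ν := by
      have he : (fun x => c * (|t| * |u x| + |t|^r * |u x|^r / r))
          = fun x => (c * |t|) * |u x| + (c * |t|^r / r) * |u x|^r := by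
        funext x; ring
      rw [he]
      exact (hu1_int.const_mul _).add (hur_int.const_mul _)
    have habs : ∀ᵐ x ∂ν, ‖∫ s in (0:ℝ)..(t * u x), f x s‖
        ≤ c * (|t| * |u x| + |t|^r * |u x|^r / r) := by
      filter_upwards [hae] with x hx
      have h := absF_le hr1 hc.le hx.1 hx.2.1 (t * u x)
      rw [Real.norm_eq_abs]
      refine h.trans (le_of_eq ?_)
      rw [abs_mul, Real.mul_rpow (abs_nonneg t) (abs_nonneg (u x))]
    have hGint : Integrable (fun x => ∫ s in (0:ℝ)..(t * u x), f x s) ν :=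
      hGb.mono' (((hGsm t).aestronglyMeasurable).congr (hae_eq t).symm) habs
    have hlowptw : ∀ᵐ x ∂ν, τ/q * |t * u x|^q - C ≤ ∫ s in (0:ℝ)..(t * u x), f x s := by
      filter_upwards [hae] with x hx
      exact F_lower hq1 hqr hc.le hτ hK hx.1 hx.2.1 hx.2.2 (t * u x)
        (absF_le hr1 hc.le hx.1 hx.2.1)
    have he : (fun x => τ/q * |t * u x|^q - C)
        = fun x => (τ/q * |t|^q) * |u x|^q - C := by
      funext x
      rw [abs_mul, Real.mul_rpow (abs_nonneg t) (abs_nonneg (u x))]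
      ring
    have hlowint : Integrable (fun x => τ/q * |t * u x|^q - C) ν := by
      rw [he]
      exact (huq_int.const_mul _).sub (integrable_const C)
    have hmono := integral_mono_ae hlowint hGint hlowptw
    have hcalc : ∫ x, (τ/q * |t * u x|^q - C) ∂ν = τ/q * |t|^q * Iq - C * m := by
      rw [he, integral_sub ((huq_int.const_mul _)) (integrable_const C),
        MeasureTheory.integral_const_mul, MeasureTheory.integral_const]
      rw [hIqdef, hmdef]
      ring_nf
      rfl
    linarith [hmono, le_of_eq hcalc]
  -- conclusion
  apply tendsto_atBot_mono' atTop (f₁ := fun t : ℝ => -(t^q) + C * m)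
  · filter_upwards [eventually_ge_atTop (1:ℝ)] with t ht
    have ht0 : (0:ℝ) ≤ t := by linarith
    have h1 := hlow t
    rw [abs_of_nonneg ht0] at h1
    have h2 : τ/q * t^q * Iq = (a/p + b/q + 1) * t^q := by
      rw [← hτIq]; ring
    have h3 : t^p ≤ t^q := Real.rpow_le_rpow_of_exponent_le ht hpq.le
    have h4 : a/p * t^p ≤ a/p * t^q := mul_le_mul_of_nonneg_left h3 hap
    nlinarith [h1, h2, h4]
  · have h1 : Tendsto (fun t : ℝ => t^q) atTop atTop := tendsto_rpow_atTop hq0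
    have h2 : Tendsto (fun t : ℝ => -(t^q)) atTop atBot := tendsto_neg_atTop_atBot.comp h1
    exact tendsto_atBot_add_const_right _ (C * m) h2
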